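/- Let A ∈ ℂ^{m×n} be nonzero, and S be an (r, ε, φ)-approximate importance matrix sketch of A. Then for any δ ∈ (0,1], with probability at least 1 − δ, |‖SA‖_F² − ‖A‖_F²| ≤ (2ε + √(ln(2/δ)/(2r)))·φ·‖A‖_F². -/

import Mathlib

open Finset

/-- Squared Euclidean norm of row `i` of a matrix. -/
noncomputable def rowNormSq {m n : ℕ} (A : Matrix (Fin m) (Fin n) ℂ) (i : Fin m) : ℝ :=
  ∑ j, ‖A i j‖ ^ 2

/-- Squared Frobenius norm of a matrix. -/
noncomputable def frobSq {m n : ℕ} (A : Matrix (Fin m) (Fin n) ℂ) : ℝ :=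
  ∑ i, ∑ j, ‖A i j‖ ^ 2

/-- The sketch matrix determined by sampled indices `s` and importance distribution `p`. -/
noncomputable def sketchMatrix {m : ℕ} (r : ℕ) (p : Fin m → ℝ) (s : Fin r → Fin m) :
    Matrix (Fin r) (Fin m) ℂ :=
  Matrix.of fun i j =>
    if j = s i ∧ 0 < p (s i) then ((1 / Real.sqrt (r * p (s i)) : ℝ) : ℂ) else 0

/-- Key pointwise inequality behind Hoeffding's lemma. -/
lemma hoeffding_key (q : ℝ) (hq0 : 0 ≤ q) (hq1 : q ≤ 1) (h : ℝ) :
    1 - q + q * Real.exp h ≤ Real.exp (q * h + h ^ 2 / 8) := by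
  set v : ℝ → ℝ := fun t => 1 - q + q * Real.exp t with hv_def
  have hv : ∀ t, 0 < v t := by
    intro t
    have he := Real.exp_pos t
    have hqe : 0 ≤ q * Real.exp t := mul_nonneg hq0 he.le
    simp only [hv_def]
    rcases lt_or_eq_of_le hq1 with h1 | h1
    · linarith
    · rw [h1]; linarith
  set f : ℝ → ℝ := fun t => q * t + t ^ 2 / 8 - Real.log (v t) with hf_def
  set f1 : ℝ → ℝ := fun t => q + t / 4 - q * Real.exp t / v t with hf1_def
  have hdv : ∀ t, HasDerivAt v (q * Real.exp t) t := by
    intro t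
    exact ((Real.hasDerivAt_exp t).const_mul q).const_add (1 - q)
  have hdf : ∀ t, HasDerivAt f (f1 t) t := by
    intro t
    have h1 : HasDerivAt (fun t : ℝ => q * t) q t := by
      simpa using (hasDerivAt_id t).const_mul q
    have h2 : HasDerivAt (fun t : ℝ => t ^ 2 / 8) (t / 4) t := by
      have := (hasDerivAt_pow 2 t).div_const 8
      exact this.congr_deriv (by norm_num; ring)
    have h3 : HasDerivAt (fun t => Real.log (v t)) (q * Real.exp t / v t) t :=
      (hdv t).log (hv t).ne'
    exact (h1.add h2).sub h3
  have hdf1 : ∀ t, HasDerivAt f1 (1 / 4 - q * Real.exp t * (1 - q) / (v t) ^ 2) t := by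
    intro t
    have h1 : HasDerivAt (fun t : ℝ => q + t / 4) (1 / 4) t := by
      simpa using ((hasDerivAt_id t).div_const 4).const_add q
    have h2 : HasDerivAt (fun t => q * Real.exp t / v t)
        ((q * Real.exp t * v t - q * Real.exp t * (q * Real.exp t)) / (v t) ^ 2) t :=
      ((Real.hasDerivAt_exp t).const_mul q).div (hdv t) (hv t).ne'
    have h2' : (q * Real.exp t * v t - q * Real.exp t * (q * Real.exp t)) / (v t) ^ 2
        = q * Real.exp t * (1 - q) / (v t) ^ 2 := by
      congr 1; simp only [hv_def]; ring
    rw [h2'] at h2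
    exact h1.sub h2
  have hf1' : ∀ t, 0 ≤ 1 / 4 - q * Real.exp t * (1 - q) / (v t) ^ 2 := by
    intro t
    have hvt := hv t
    rw [sub_nonneg, div_le_iff₀ (by positivity)]
    have he := (Real.exp_pos t).le
    have : v t = (1 - q) + q * Real.exp t := rfl
    nlinarith [sq_nonneg ((1 - q) - q * Real.exp t),
      mul_nonneg (mul_nonneg hq0 he) (sub_nonneg.mpr hq1)]
  have hf1mono : Monotone f1 :=
    monotone_of_deriv_nonneg (fun t => (hdf1 t).differentiableAt) (by
      intro t; rw [(hdf1 t).deriv]; exact hf1' t)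
  have hf1zero : f1 0 = 0 := by
    simp only [hf1_def, hv_def, Real.exp_zero, mul_one]
    field_simp
    ring
  have hfzero : f 0 = 0 := by
    simp [hf_def, hv_def]
  have hf_nonneg : 0 ≤ f h := by
    rcases le_or_gt 0 h with hh | hh
    · have : MonotoneOn f (Set.Ici 0) := by
        apply monotoneOn_of_deriv_nonneg (convex_Ici 0)
          (fun t _ => ((hdf t).differentiableAt.continuousAt.continuousWithinAt))
          (fun t _ => ((hdf t).differentiableAt.differentiableWithinAt))
        intro t ht
        rw [(hdf t).deriv]
        rw [interior_Ici] at ht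
        have := hf1mono (le_of_lt ht)
        rw [hf1zero] at this; exact this
      have := this Set.self_mem_Ici (Set.mem_Ici.mpr hh) hh
      rw [hfzero] at this; exact this
    · have : AntitoneOn f (Set.Iic 0) := by
        apply antitoneOn_of_deriv_nonpos (convex_Iic 0)
          (fun t _ => ((hdf t).differentiableAt.continuousAt.continuousWithinAt))
          (fun t _ => ((hdf t).differentiableAt.differentiableWithinAt))
        intro t ht
        rw [(hdf t).deriv]
        rw [interior_Iic] at ht
        have := hf1mono (le_of_lt ht)
        rw [hf1zero] at this; exact this
      have := this (Set.mem_Iic.mpr hh.le) Set.self_mem_Iic hh.le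
      rw [hfzero] at this; exact this
  have hlog : Real.log (v h) ≤ q * h + h ^ 2 / 8 := by
    simp only [hf_def] at hf_nonneg; linarith
  calc v h = Real.exp (Real.log (v h)) := (Real.exp_log (hv h)).symm
    _ ≤ Real.exp (q * h + h ^ 2 / 8) := Real.exp_le_exp.mpr hlog

/-- Finite weighted Hoeffding mgf bound for values in `[0, c]`. -/
lemma mgf_bound {ι : Type*} [Fintype ι] (q z : ι → ℝ) (hq : ∀ i, 0 ≤ q i)
    (hq1 : ∑ i, q i = 1) (c : ℝ) (hc : 0 < c) (hz0 : ∀ i, 0 ≤ z i) (hzc : ∀ i, z i ≤ c)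
    (l : ℝ) :
    ∑ i, q i * Real.exp (l * z i)
      ≤ Real.exp (l * (∑ i, q i * z i) + l ^ 2 * c ^ 2 / 8) := by
  set μ : ℝ := ∑ i, q i * z i with hμ_def
  have hμ0 : 0 ≤ μ := Finset.sum_nonneg fun i _ => mul_nonneg (hq i) (hz0 i)
  have hμc : μ ≤ c := by
    calc μ ≤ ∑ i, q i * c := Finset.sum_le_sum fun i _ =>
            mul_le_mul_of_nonneg_left (hzc i) (hq i)
      _ = c := by rw [← Finset.sum_mul, hq1, one_mul]
  have step1 : ∑ i, q i * Real.exp (l * z i)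
      ≤ 1 - μ / c + (μ / c) * Real.exp (l * c) := by
    have conv : ∀ i, Real.exp (l * z i)
        ≤ (1 - z i / c) + (z i / c) * Real.exp (l * c) := by
      intro i
      have h1 : 0 ≤ 1 - z i / c := by
        rw [sub_nonneg, div_le_one hc]; exact hzc i
      have h2 : 0 ≤ z i / c := div_nonneg (hz0 i) hc.le
      have h3 : (1 - z i / c) + z i / c = 1 := by ring
      have := convexOn_exp.2 (Set.mem_univ 0) (Set.mem_univ (l * c)) h1 h2 h3
      simp only [smul_eq_mul, mul_zero, zero_add, Real.exp_zero, mul_one] at this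
      have harg : (z i / c) * (l * c) = l * z i := by field_simp
      rw [harg] at this
      linarith
    calc ∑ i, q i * Real.exp (l * z i)
        ≤ ∑ i, q i * ((1 - z i / c) + (z i / c) * Real.exp (l * c)) :=
          Finset.sum_le_sum fun i _ => mul_le_mul_of_nonneg_left (conv i) (hq i)
      _ = (∑ i, q i) - (∑ i, q i * z i) / c + ((∑ i, q i * z i) / c) * Real.exp (l * c) := by
          rw [Finset.sum_div, Finset.sum_mul, ← Finset.sum_sub_distrib, ← Finset.sum_add_distrib]
          congr 1; ext i; field_simp
      _ = 1 - μ / c + (μ / c) * Real.exp (l * c) := by rw [hq1, hμ_def]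
  have step2 : 1 - μ / c + (μ / c) * Real.exp (l * c)
      ≤ Real.exp ((μ / c) * (l * c) + (l * c) ^ 2 / 8) :=
    hoeffding_key (μ / c) (div_nonneg hμ0 hc.le) ((div_le_one hc).mpr hμc) (l * c)
  have harg2 : (μ / c) * (l * c) + (l * c) ^ 2 / 8 = l * μ + l ^ 2 * c ^ 2 / 8 := by
    field_simp
  rw [harg2] at step2
  exact step1.trans step2

/-- One-sided Hoeffding tail bound, finite weighted form. -/
lemma tail_bound {m r : ℕ} (hr : 0 < r) (q : Fin m → ℝ) (hq : ∀ k, 0 ≤ q k)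
    (hq1 : ∑ k, q k = 1) (g : Fin m → ℝ) (c : ℝ) (hc : 0 < c)
    (hg0 : ∀ k, 0 ≤ g k) (hgc : ∀ k, g k ≤ c) (t : ℝ) (ht : 0 < t) :
    ∑ s : Fin r → Fin m,
        (if t ≤ (∑ i, g (s i)) - r * (∑ k, q k * g k) then ∏ i, q (s i) else 0)
      ≤ Real.exp (-2 * t ^ 2 / (r * c ^ 2)) := by
  set μ : ℝ := ∑ k, q k * g k with hμ_def
  set l : ℝ := 4 * t / (r * c ^ 2) with hl_def
  have hrR : (0:ℝ) < r := Nat.cast_pos.mpr hr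
  have hl : 0 < l := by positivity
  have point : ∀ s : Fin r → Fin m,
      (if t ≤ (∑ i, g (s i)) - r * μ then ∏ i, q (s i) else 0)
        ≤ Real.exp (l * ((∑ i, g (s i)) - r * μ - t)) * ∏ i, q (s i) := by
    intro s
    have hW : 0 ≤ ∏ i, q (s i) := Finset.prod_nonneg fun i _ => hq (s i)
    split_ifs with hcond
    · have : (1:ℝ) ≤ Real.exp (l * ((∑ i, g (s i)) - r * μ - t)) := by
        rw [← Real.exp_zero]
        apply Real.exp_le_exp.mpr
        have : 0 ≤ (∑ i, g (s i)) - r * μ - t := by linarith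
        positivity
      nlinarith
    · positivity
  have sum_point := Finset.sum_le_sum (fun s (_ : s ∈ Finset.univ) => point s)
  refine sum_point.trans ?_
  have factor : ∑ s : Fin r → Fin m,
      Real.exp (l * ((∑ i, g (s i)) - r * μ - t)) * ∏ i, q (s i)
      = Real.exp (l * (-(r * μ) - t)) * (∑ k, q k * Real.exp (l * g k)) ^ r := by
    have h1 : ∀ s : Fin r → Fin m,
        Real.exp (l * ((∑ i, g (s i)) - r * μ - t)) * ∏ i, q (s i)
          = Real.exp (l * (-(r * μ) - t)) * ∏ i, q (s i) * Real.exp (l * g (s i)) := by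
      intro s
      have hsplit : Real.exp (l * ((∑ i, g (s i)) - ↑r * μ - t))
          = Real.exp (l * (-(↑r * μ) - t)) * Real.exp (l * ∑ i, g (s i)) := by
        rw [← Real.exp_add]; congr 1; ring
      rw [Finset.prod_mul_distrib, ← Real.exp_sum, ← Finset.mul_sum, hsplit]; ring
    simp only [h1]
    rw [← Finset.mul_sum]
    congr 1
    have := Finset.sum_prod_piFinset (Finset.univ : Finset (Fin m))
      (fun (_ : Fin r) (k : Fin m) => q k * Real.exp (l * g k))
    rw [Fintype.piFinset_univ] at this
    rw [this, Finset.prod_const, Finset.card_univ, Fintype.card_fin]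
  rw [factor]
  have hM := mgf_bound q g hq hq1 c hc hg0 hgc l
  have hMnn : 0 ≤ ∑ k, q k * Real.exp (l * g k) :=
    Finset.sum_nonneg fun k _ => mul_nonneg (hq k) (Real.exp_pos _).le
  have hpow : (∑ k, q k * Real.exp (l * g k)) ^ r
      ≤ Real.exp (l * μ + l ^ 2 * c ^ 2 / 8) ^ r := pow_le_pow_left₀ hMnn hM r
  calc Real.exp (l * (-(r * μ) - t)) * (∑ k, q k * Real.exp (l * g k)) ^ r
      ≤ Real.exp (l * (-(r * μ) - t)) * Real.exp (l * μ + l ^ 2 * c ^ 2 / 8) ^ r :=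
        mul_le_mul_of_nonneg_left hpow (Real.exp_pos _).le
    _ = Real.exp (l * (-(r * μ) - t) + r * (l * μ + l ^ 2 * c ^ 2 / 8)) := by
        rw [← Real.exp_nat_mul, ← Real.exp_add]
    _ = Real.exp (-2 * t ^ 2 / (r * c ^ 2)) := by
        congr 1
        rw [hl_def]
        field_simp
        ring

/-- Two-sided concentration around a reference value `F`. -/
lemma two_sided_bound {m r : ℕ} (hr : 0 < r) (q : Fin m → ℝ) (hq : ∀ k, 0 ≤ q k)
    (hq1 : ∑ k, q k = 1) (g : Fin m → ℝ) (c : ℝ) (hc : 0 < c)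
    (hg0 : ∀ k, 0 ≤ g k) (hgc : ∀ k, g k ≤ c)
    (F b t : ℝ) (ht : 0 < t)
    (hμF : |r * (∑ k, q k * g k) - F| ≤ b - t)
    (δ : ℝ) (hδ : Real.exp (-2 * t ^ 2 / (r * c ^ 2)) ≤ δ / 2) :
    1 - δ ≤ ∑ s : Fin r → Fin m,
      (if |(∑ i, g (s i)) - F| ≤ b then ∏ i, q (s i) else 0) := by
  set μ : ℝ := ∑ k, q k * g k with hμ_def
  have hW0 : ∀ s : Fin r → Fin m, 0 ≤ ∏ i, q (s i) :=
    fun s => Finset.prod_nonneg fun i _ => hq (s i)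
  have hWsum : ∑ s : Fin r → Fin m, ∏ i, q (s i) = 1 := by
    have h := Finset.sum_prod_piFinset (Finset.univ : Finset (Fin m))
      (fun (_ : Fin r) (k : Fin m) => q k)
    rw [Fintype.piFinset_univ] at h
    rw [h, hq1]
    simp
  have tail1 := tail_bound hr q hq hq1 g c hc hg0 hgc t ht
  have tail2 := tail_bound hr q hq hq1 (fun k => c - g k) c hc
    (fun k => sub_nonneg.mpr (hgc k)) (fun k => by simpa using sub_le_self c (hg0 k)) t ht
  have hcond : ∀ s : Fin r → Fin m,
      (∑ i, (c - g (s i))) - (r : ℝ) * (∑ k, q k * (c - g k))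
        = (r : ℝ) * μ - ∑ i, g (s i) := by
    intro s
    have h1 : ∑ k, q k * (c - g k) = c - μ := by
      simp only [mul_sub]
      rw [Finset.sum_sub_distrib, ← Finset.sum_mul, hq1, one_mul, hμ_def]
    rw [h1, Finset.sum_sub_distrib, Finset.sum_const, Finset.card_univ, Fintype.card_fin,
      nsmul_eq_mul]
    ring
  simp only [hcond] at tail2
  have hpoint : ∀ s : Fin r → Fin m,
      (if |(∑ i, g (s i)) - F| ≤ b then 0 else ∏ i, q (s i))
        ≤ (if t ≤ (∑ i, g (s i)) - r * μ then ∏ i, q (s i) else 0)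
          + (if t ≤ r * μ - ∑ i, g (s i) then ∏ i, q (s i) else 0) := by
    intro s
    have hW := hW0 s
    by_cases hG : |(∑ i, g (s i)) - F| ≤ b
    · rw [if_pos hG]
      have h1 : (0:ℝ) ≤ if t ≤ (∑ i, g (s i)) - r * μ then ∏ i, q (s i) else 0 := by
        split_ifs <;> simp [hW]
      have h2 : (0:ℝ) ≤ if t ≤ r * μ - ∑ i, g (s i) then ∏ i, q (s i) else 0 := by
        split_ifs <;> simp [hW]
      linarith
    · rw [if_neg hG]
      have hG' : b < |(∑ i, g (s i)) - F| := lt_of_not_ge hG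
      have habs : t < |(∑ i, g (s i)) - r * μ| := by
        have h3 := abs_sub_abs_le_abs_sub ((∑ i, g (s i)) - F) ((r:ℝ) * μ - F)
        rw [sub_sub_sub_cancel_right] at h3
        linarith
      rcases lt_abs.mp habs with hcs | hcs
      · have h1 : t ≤ (∑ i, g (s i)) - r * μ := hcs.le
        rw [if_pos h1]
        have h2 : (0:ℝ) ≤ if t ≤ r * μ - ∑ i, g (s i) then ∏ i, q (s i) else 0 := by
          split_ifs <;> simp [hW]
        linarith
      · have h1 : t ≤ r * μ - ∑ i, g (s i) := by
          rw [neg_sub] at hcs; exact hcs.le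
        rw [if_pos h1]
        have h2 : (0:ℝ) ≤ if t ≤ (∑ i, g (s i)) - r * μ then ∏ i, q (s i) else 0 := by
          split_ifs <;> simp [hW]
        linarith
  have hsplit : ∀ s : Fin r → Fin m,
      (if |(∑ i, g (s i)) - F| ≤ b then ∏ i, q (s i) else 0)
        = (∏ i, q (s i)) - (if |(∑ i, g (s i)) - F| ≤ b then 0 else ∏ i, q (s i)) := by
    intro s; split_ifs <;> ring
  rw [Finset.sum_congr rfl fun s _ => hsplit s, Finset.sum_sub_distrib, hWsum]
  have hbad : ∑ s : Fin r → Fin m,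
      (if |(∑ i, g (s i)) - F| ≤ b then 0 else ∏ i, q (s i)) ≤ δ := by
    calc ∑ s : Fin r → Fin m, (if |(∑ i, g (s i)) - F| ≤ b then 0 else ∏ i, q (s i))
        ≤ ∑ s : Fin r → Fin m,
            ((if t ≤ (∑ i, g (s i)) - r * μ then ∏ i, q (s i) else 0)
              + (if t ≤ r * μ - ∑ i, g (s i) then ∏ i, q (s i) else 0)) :=
          Finset.sum_le_sum fun s _ => hpoint s
      _ = (∑ s : Fin r → Fin m, (if t ≤ (∑ i, g (s i)) - r * μ then ∏ i, q (s i) else 0))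
            + ∑ s : Fin r → Fin m, (if t ≤ r * μ - ∑ i, g (s i) then ∏ i, q (s i) else 0) :=
          Finset.sum_add_distrib
      _ ≤ δ / 2 + δ / 2 := add_le_add (tail1.trans hδ) (tail2.trans hδ)
      _ = δ := by ring
  linarith

/-- The row weights of an importance sketch. -/
noncomputable def gfun {m n : ℕ} (A : Matrix (Fin m) (Fin n) ℂ) (r : ℕ) (p : Fin m → ℝ)
    (k : Fin m) : ℝ :=
  if 0 < p k then rowNormSq A k / (r * p k) else 0

lemma frobSq_sketch {m n r : ℕ} (A : Matrix (Fin m) (Fin n) ℂ) (p : Fin m → ℝ)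
    (s : Fin r → Fin m) :
    frobSq (sketchMatrix r p s * A) = ∑ i, gfun A r p (s i) := by
  unfold frobSq
  refine Finset.sum_congr rfl fun i _ => ?_
  have hr : 0 < r := i.pos
  have entry : ∀ j, (sketchMatrix r p s * A) i j
      = if 0 < p (s i) then ((1 / Real.sqrt (r * p (s i)) : ℝ) : ℂ) * A (s i) j else 0 := by
    intro j
    rw [Matrix.mul_apply]
    simp only [sketchMatrix, Matrix.of_apply]
    split_ifs with hps
    · rw [Finset.sum_eq_single (s i)]
      · simp [hps]
      · intro k _ hk; simp [hk]
      · simp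
    · apply Finset.sum_eq_zero; intro k _
      rw [if_neg (by tauto), zero_mul]
  by_cases hps : 0 < p (s i)
  · have hrp : (0:ℝ) < r * p (s i) := by
      have : (0:ℝ) < (r:ℝ) := Nat.cast_pos.mpr hr
      positivity
    simp only [entry, if_pos hps, gfun]
    have hnorm : ∀ j, ‖((1 / Real.sqrt (r * p (s i)) : ℝ) : ℂ) * A (s i) j‖ ^ 2
        = (1 / (r * p (s i))) * ‖A (s i) j‖ ^ 2 := by
      intro j
      rw [norm_mul, Complex.norm_real, Real.norm_eq_abs, mul_pow, sq_abs]
      congr 1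
      rw [div_pow, one_pow, Real.sq_sqrt hrp.le]
    simp only [hnorm]
    rw [← Finset.mul_sum, rowNormSq]
    field_simp
  · simp only [entry, if_neg hps, gfun]
    simp

/-- **Concentration of `‖SA‖_F²` for an approximate importance sketch.**
With `S` an `(r,ε,φ)`-approximate importance matrix sketch of a nonzero `A` (rows sampled
i.i.d. from `p̃` with `‖p̃−p‖_TV ≤ ε` and `p(i) ≥ (1/φ)‖A(i,·)‖²/‖A‖_F²`), for any
`δ ∈ (0,1]`, with probability at least `1−δ` over the samples,
`|‖SA‖_F² − ‖A‖_F²| ≤ (2ε + √(ln(2/δ)/(2r)))·φ·‖A‖_F²`. -/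
theorem approx_importance_sketch_frobenius_concentration
    (m n r : ℕ) (hr : 1 ≤ r) (hrm : r ≤ m)
    (A : Matrix (Fin m) (Fin n) ℂ) (hA : A ≠ 0)
    (ε : ℝ) (hε : ε ∈ Set.Icc (0:ℝ) 1) (φ : ℝ) (hφ : 1 ≤ φ)
    (δ : ℝ) (hδ : δ ∈ Set.Ioc (0:ℝ) 1)
    (p ptilde : Fin m → ℝ)
    (hp_nonneg : ∀ i, 0 ≤ p i) (hp_sum : ∑ i, p i = 1)
    (hpt_nonneg : ∀ i, 0 ≤ ptilde i) (hpt_sum : ∑ i, ptilde i = 1)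
    (hp_over : ∀ i, (1 / φ) * (rowNormSq A i / frobSq A) ≤ p i)
    (hTV : (1/2) * ∑ i, |ptilde i - p i| ≤ ε) :
    1 - δ ≤ ∑ s : Fin r → Fin m,
      if |frobSq (sketchMatrix r p s * A) - frobSq A|
          ≤ (2 * ε + Real.sqrt (Real.log (2/δ) / (2 * r))) * φ * frobSq A
      then ∏ i, ptilde (s i) else 0 := by
  obtain ⟨hδ0, hδ1⟩ := hδ
  obtain ⟨hε0, hε1⟩ := hε
  have hr0 : 0 < r := hr
  have hrR : (0:ℝ) < r := Nat.cast_pos.mpr hr0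
  have hφ0 : (0:ℝ) < φ := lt_of_lt_of_le one_pos hφ
  have hrow_nn : ∀ k, 0 ≤ rowNormSq A k :=
    fun k => Finset.sum_nonneg fun j _ => pow_two_nonneg _
  -- positivity of the Frobenius norm
  have hF : 0 < frobSq A := by
    obtain ⟨i, j, hij⟩ : ∃ i j, A i j ≠ 0 := by
      by_contra hcon
      push_neg at hcon
      exact hA (by ext i j; simpa using hcon i j)
    have hrowpos : 0 < rowNormSq A i := by
      apply Finset.sum_pos' (fun j _ => pow_two_nonneg _)
      exact ⟨j, Finset.mem_univ j, pow_pos (norm_pos_iff.mpr hij) 2⟩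
    apply Finset.sum_pos' (fun k _ => hrow_nn k)
    exact ⟨i, Finset.mem_univ i, hrowpos⟩
  set F : ℝ := frobSq A with hF_def
  set c : ℝ := φ * F / r with hc_def
  have hc : 0 < c := by positivity
  have hg0 : ∀ k, 0 ≤ gfun A r p k := by
    intro k; unfold gfun; split_ifs with h
    · have hrp : (0:ℝ) < r * p k := by positivity
      exact div_nonneg (hrow_nn k) hrp.le
    · exact le_refl 0
  have hrow_le : ∀ k, rowNormSq A k ≤ φ * F * p k := by
    intro k
    have h := hp_over k
    rw [div_mul_eq_mul_div, div_le_iff₀ hφ0] at h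
    have h2 : rowNormSq A k / F ≤ p k * φ := by linarith
    rw [div_le_iff₀ hF] at h2
    nlinarith
  have hgc : ∀ k, gfun A r p k ≤ c := by
    intro k; unfold gfun; split_ifs with h
    · rw [hc_def, div_le_div_iff₀ (by positivity) hrR]
      have := hrow_le k
      nlinarith
    · exact hc.le
  have hrow0 : ∀ k, ¬ 0 < p k → rowNormSq A k = 0 := by
    intro k h
    have hpk : p k = 0 := le_antisymm (not_lt.mp h) (hp_nonneg k)
    have h1 := hp_over k
    rw [hpk] at h1
    have h2 : 0 ≤ (1/φ) * (rowNormSq A k / F) :=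
      mul_nonneg (by positivity) (div_nonneg (hrow_nn k) hF.le)
    have h3 : (1/φ) * (rowNormSq A k / F) = 0 := le_antisymm h1 h2
    have h4 : rowNormSq A k / F = 0 := by
      rcases mul_eq_zero.mp h3 with h5 | h5
      · exfalso; rw [one_div, inv_eq_zero] at h5; exact hφ0.ne' h5
      · exact h5
    field_simp at h4
    simpa using h4
  -- mean under p
  have hmean : ∑ k, p k * gfun A r p k = F / r := by
    have hterm : ∀ k, p k * gfun A r p k = rowNormSq A k / r := by
      intro k; unfold gfun; split_ifs with h
      · field_simp
      · rw [mul_zero, hrow0 k h, zero_div]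
    rw [Finset.sum_congr rfl fun k _ => hterm k, ← Finset.sum_div]
    congr 1
  -- TV distance bound on the mean shift
  have hTV' : ∑ k, |ptilde k - p k| ≤ 2 * ε := by linarith
  have hshift : |(r:ℝ) * (∑ k, ptilde k * gfun A r p k) - F| ≤ 2 * ε * φ * F := by
    have hdiff : (∑ k, ptilde k * gfun A r p k) - (∑ k, p k * gfun A r p k)
        = ∑ k, (ptilde k - p k) * gfun A r p k := by
      rw [← Finset.sum_sub_distrib]
      exact Finset.sum_congr rfl fun k _ => by ring
    have habs : |(∑ k, ptilde k * gfun A r p k) - F / r| ≤ 2 * ε * c := by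
      rw [← hmean, hdiff]
      calc |∑ k, (ptilde k - p k) * gfun A r p k|
          ≤ ∑ k, |(ptilde k - p k) * gfun A r p k| := Finset.abs_sum_le_sum_abs _ _
        _ = ∑ k, |ptilde k - p k| * gfun A r p k := by
            refine Finset.sum_congr rfl fun k _ => ?_
            rw [abs_mul, abs_of_nonneg (hg0 k)]
        _ ≤ ∑ k, |ptilde k - p k| * c := Finset.sum_le_sum fun k _ =>
            mul_le_mul_of_nonneg_left (hgc k) (abs_nonneg _)
        _ = (∑ k, |ptilde k - p k|) * c := by rw [Finset.sum_mul]
        _ ≤ 2 * ε * c := mul_le_mul_of_nonneg_right hTV' hc.le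
    have hrc : (r:ℝ) * c = φ * F := by
      rw [hc_def]; field_simp
    calc |(r:ℝ) * (∑ k, ptilde k * gfun A r p k) - F|
        = (r:ℝ) * |(∑ k, ptilde k * gfun A r p k) - F / r| := by
          rw [← abs_of_pos hrR, ← abs_mul]
          congr 1
          field_simp
          rw [abs_of_pos hrR]; ring
        _ ≤ (r:ℝ) * (2 * ε * c) := mul_le_mul_of_nonneg_left habs hrR.le
        _ = 2 * ε * (↑r * c) := by ring
        _ = 2 * ε * (φ * F) := by rw [hrc]
        _ = 2 * ε * φ * F := by ring
  -- the deviation parameter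
  set L : ℝ := Real.log (2/δ) with hL_def
  have hL : 0 < L := Real.log_pos (by rw [lt_div_iff₀ hδ0]; linarith)
  set t : ℝ := Real.sqrt (L / (2 * r)) * (φ * F) with ht_def
  have hsq : 0 < Real.sqrt (L / (2 * r)) := Real.sqrt_pos.mpr (by positivity)
  have ht : 0 < t := by positivity
  have hexp : Real.exp (-2 * t ^ 2 / (r * c ^ 2)) ≤ δ / 2 := by
    have hts : t ^ 2 = L / (2 * r) * (φ * F) ^ 2 := by
      rw [ht_def, mul_pow, Real.sq_sqrt (by positivity)]
    have harg : -2 * t ^ 2 / (r * c ^ 2) = -L := by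
      rw [hts, hc_def]
      field_simp
    rw [harg, Real.exp_neg, hL_def, Real.exp_log (by positivity), inv_div]
  -- apply the two-sided bound
  have hb : |(r:ℝ) * (∑ k, ptilde k * gfun A r p k) - F|
      ≤ (2 * ε + Real.sqrt (Real.log (2/δ) / (2 * r))) * φ * F - t := by
    have : (2 * ε + Real.sqrt (Real.log (2/δ) / (2 * r))) * φ * F - t = 2 * ε * φ * F := by
      rw [ht_def, hL_def]; ring
    rw [this]
    exact hshift
  have key := two_sided_bound hr0 ptilde hpt_nonneg hpt_sum (gfun A r p) c hc hg0 hgc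
    F ((2 * ε + Real.sqrt (Real.log (2/δ) / (2 * r))) * φ * F) t ht hb δ hexp
  calc (1:ℝ) - δ
      ≤ ∑ s : Fin r → Fin m,
          (if |(∑ i, gfun A r p (s i)) - F|
              ≤ (2 * ε + Real.sqrt (Real.log (2/δ) / (2 * r))) * φ * F
            then ∏ i, ptilde (s i) else 0) := key
    _ = _ := by
        refine Finset.sum_congr rfl fun s _ => ?_
        rw [frobSq_sketch A p s]
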